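/- arXiv:1909.09693 — 2 statements merged into one kernel-verified Lean document; each statement's English description precedes it below -/
import Mathlib

section
/- Suppose V : ℝ≥0 → ℝ is differentiable along a trajectory and satisfies: whenever γ(c) < V(t) we have V'(t) < 0, where γ is class-κ and c ≥ 0 is fixed. Then V(t) ≤ max{V(0), γ(c)} for all t ≥ 0. -/
/-- comparison lemma. If `V` is differentiable and its derivative is
negative whenever `γ c < V t` (γ class-κ, `c ≥ 0`), then `V t ≤ max (V 0) (γ c)`
for all `t ≥ 0`. -/
theorem stmt_1 (γ : ℝ → ℝ) (hγc : Continuous γ) (hγm : StrictMono γ) (hγ0 : γ 0 = 0)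
    (c : ℝ) (hc : 0 ≤ c) (V : ℝ → ℝ) (hV : Differentiable ℝ V)
    (hdec : ∀ t, 0 ≤ t → γ c < V t → deriv V t < 0) :
    ∀ t, 0 ≤ t → V t ≤ max (V 0) (γ c) := by
  intro t ht
  by_contra h
  push_neg at h
  set M := max (V 0) (γ c) with hM
  have hV0 : V 0 ≤ M := le_max_left _ _
  have hγcM : γ c ≤ M := le_max_right _ _
  set S : Set ℝ := Set.Icc 0 t ∩ V ⁻¹' Set.Iic M with hS
  have hSc : IsClosed S := (isClosed_Icc).inter (isClosed_Iic.preimage hV.continuous)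
  have hSne : S.Nonempty := ⟨0, ⟨le_refl 0, ht⟩, hV0⟩
  have hSbdd : BddAbove S := BddAbove.mono (Set.inter_subset_left) bddAbove_Icc
  set s₀ := sSup S with hs₀
  have hs₀mem : s₀ ∈ S := hSc.csSup_mem hSne hSbdd
  obtain ⟨⟨hs₀0, hs₀t⟩, hVs₀⟩ := hs₀mem
  have hs₀lt : s₀ < t := lt_of_le_of_ne hs₀t (fun heq => absurd (heq ▸ hVs₀) (not_le.mpr h))
  have hgt : ∀ x ∈ Set.Ioc s₀ t, M < V x := by
    intro x ⟨hx1, hx2⟩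
    by_contra hx
    push_neg at hx
    have : x ∈ S := ⟨⟨hs₀0.trans hx1.le, hx2⟩, hx⟩
    exact absurd (le_csSup hSbdd this) (not_le.mpr hx1)
  have hanti : StrictAntiOn V (Set.Icc s₀ t) := by
    apply strictAntiOn_of_deriv_neg (convex_Icc _ _) hV.continuous.continuousOn
    intro x hx
    rw [interior_Icc] at hx
    exact hdec x (hs₀0.trans hx.1.le)
      (lt_of_le_of_lt hγcM (hgt x ⟨hx.1, hx.2.le⟩))
  have := hanti (Set.left_mem_Icc.mpr hs₀lt.le) (Set.right_mem_Icc.mpr hs₀lt.le) hs₀lt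
  exact absurd (this.trans_le hVs₀) (not_lt.mpr h.le)
end

section
/- If A₁ + B₁K is Hurwitz (all eigenvalues have negative real part), then there exist a symmetric positive definite matrix M and λ > 0 such that M ≥ C₁ᵀC₁ and (A₁+B₁K)ᵀM + M(A₁+B₁K) ≤ −2λM (in the Loewner order). -/
open Matrix NormedSpace MeasureTheory Set Filter

attribute [local instance] Matrix.linftyOpNormedAddCommGroup Matrix.linftyOpNormedRing
  Matrix.linftyOpNormedAlgebra

namespace StmtTwo

variable {d : ℕ}

/-- mulVec by a fixed vector, as a linear map in the matrix. -/
noncomputable def mulVecRight (v : Fin d → ℂ) : Matrix (Fin d) (Fin d) ℂ →ₗ[ℂ] (Fin d → ℂ) where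
  toFun M := M *ᵥ v
  map_add' M N := Matrix.add_mulVec M N v
  map_smul' c M := Matrix.smul_mulVec c M v

lemma exp_mulVec_of_genEig {N : Matrix (Fin d) (Fin d) ℂ} {x : Fin d → ℂ} {k : ℕ}
    (hk : N ^ k *ᵥ x = 0) (t : ℝ) :
    exp ((t : ℂ) • N) *ᵥ x
      = ∑ j ∈ Finset.range k, (((Nat.factorial j : ℂ))⁻¹ * (t:ℂ) ^ j) • (N ^ j *ᵥ x) := by
  have hL : Continuous (mulVecRight (d := d) x) :=
    LinearMap.continuous_of_finiteDimensional _
  have hsum : Summable fun j : ℕ => ((Nat.factorial j : ℂ))⁻¹ • ((t:ℂ) • N) ^ j :=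
    expSeries_summable' (𝕂 := ℂ) ((t:ℂ) • N)
  have h1 : exp ((t : ℂ) • N) *ᵥ x
      = ∑' j : ℕ, (mulVecRight x) (((Nat.factorial j : ℂ))⁻¹ • ((t:ℂ) • N) ^ j) := by
    rw [exp_eq_tsum ℂ]
    exact ((ContinuousLinearMap.mk (mulVecRight x) hL).map_tsum hsum)
  rw [h1]
  rw [tsum_eq_sum (s := Finset.range k) ?_]
  · refine Finset.sum_congr rfl fun j _ => ?_
    show (((Nat.factorial j : ℂ))⁻¹ • ((t:ℂ) • N) ^ j) *ᵥ x = _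
    rw [smul_pow, smul_smul, Matrix.smul_mulVec]
  · intro j hj
    rw [Finset.mem_range, not_lt] at hj
    show (((Nat.factorial j : ℂ))⁻¹ • ((t:ℂ) • N) ^ j) *ᵥ x = 0
    rw [smul_pow, smul_smul, Matrix.smul_mulVec]
    have : N ^ j *ᵥ x = 0 := by
      have : N ^ j = N ^ (j - k) * N ^ k := by rw [← pow_add]; congr 1; omega
      rw [this, ← Matrix.mulVec_mulVec, hk, Matrix.mulVec_zero]
    rw [this, smul_zero]

lemma decay_vec (Ac : Matrix (Fin d) (Fin d) ℂ) {ε : ℝ} (hε : 0 < ε)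
    (hspec : ∀ μ ∈ spectrum ℂ Ac, μ.re ≤ -(2*ε)) (v : Fin d → ℂ) :
    ∃ C : ℝ, ∀ t : ℝ, 0 ≤ t → ‖exp ((t : ℂ) • Ac) *ᵥ v‖ ≤ C * Real.exp (-(ε * t)) := by
  set T : Module.End ℂ (Fin d → ℂ) := Matrix.toLinAlgEquiv' Ac with hT
  have htop : ⨆ μ : ℂ, T.maxGenEigenspace μ = ⊤ := Module.End.iSup_maxGenEigenspace_eq_top T
  have hv : v ∈ ⨆ μ : ℂ, T.maxGenEigenspace μ := htop ▸ Submodule.mem_top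
  refine Submodule.iSup_induction (motive := fun x => ∃ C : ℝ, ∀ t : ℝ, 0 ≤ t →
      ‖exp ((t:ℂ) • Ac) *ᵥ x‖ ≤ C * Real.exp (-(ε * t))) _ hv ?_ ?_ ?_
  · intro μ x hx
    rcases eq_or_ne x 0 with rfl | hx0
    · exact ⟨0, by simp [Matrix.mulVec_zero]⟩
    obtain ⟨k, hk⟩ := (Module.End.mem_maxGenEigenspace T μ x).mp hx
    -- μ is in the spectrum
    have hμ : μ.re ≤ -(2*ε) := by
      refine hspec μ ?_
      have h1 : T.HasGenEigenvalue μ k := by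
        rw [Module.End.hasGenEigenvalue_iff]
        intro hbot
        refine hx0 ?_
        have : x ∈ T.genEigenspace μ k := by
          rw [Module.End.mem_genEigenspace_nat, LinearMap.mem_ker]; exact hk
        simpa [hbot] using this
      have h2 := Module.End.hasEigenvalue_of_hasGenEigenvalue h1
      rw [Module.End.hasEigenvalue_iff_mem_spectrum] at h2
      rwa [hT, AlgEquiv.spectrum_eq Matrix.toLinAlgEquiv' Ac] at h2
    -- generalized eigenvector equation for the matrix N
    set N : Matrix (Fin d) (Fin d) ℂ := Ac - μ • 1 with hN
    have hNx : N ^ k *ᵥ x = 0 := by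
      have hmap : Matrix.toLinAlgEquiv' (N ^ k) = (T - μ • 1) ^ k := by
        rw [map_pow]; congr 1
        rw [hN, map_sub, _root_.map_smul, _root_.map_one]
      have : Matrix.toLinAlgEquiv' (N ^ k) x = 0 := by rw [hmap]; exact hk
      rw [Matrix.toLinAlgEquiv'_apply] at this; exact this
    -- decomposition of the exponential
    have hsplit : ∀ t : ℝ, exp ((t:ℂ) • Ac) = Complex.exp ((t:ℂ) * μ) • exp ((t:ℂ) • N) := by
      intro t
      have hAc : (t:ℂ) • Ac = ((t:ℂ) * μ) • (1 : Matrix (Fin d) (Fin d) ℂ) + (t:ℂ) • N := by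
        rw [hN, smul_sub, smul_smul]; ring_nf; abel
      have hcomm : Commute (((t:ℂ) * μ) • (1 : Matrix (Fin d) (Fin d) ℂ)) ((t:ℂ) • N) :=
        ((Commute.one_left ((t:ℂ) • N)).smul_left _)
      rw [hAc, Matrix.exp_add_of_commute _ _ hcomm]
      have h1 : exp (((t:ℂ) * μ) • (1 : Matrix (Fin d) (Fin d) ℂ))
          = Complex.exp ((t:ℂ) * μ) • (1 : Matrix (Fin d) (Fin d) ℂ) := by
        have := algebraMap_exp_comm (𝕂 := ℂ) (𝔸 := Matrix (Fin d) (Fin d) ℂ) ((t:ℂ) * μ)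
        rw [Algebra.algebraMap_eq_smul_one, Algebra.algebraMap_eq_smul_one,
          ← Complex.exp_eq_exp_ℂ] at this
        exact this.symm
      rw [h1, Matrix.smul_mul, Matrix.one_mul]
    set C : ℝ := ∑ j ∈ Finset.range k, (ε⁻¹) ^ j * ‖N ^ j *ᵥ x‖ with hC
    refine ⟨C, fun t ht => ?_⟩
    rw [hsplit t, Matrix.smul_mulVec, norm_smul, exp_mulVec_of_genEig hNx t]
    have habs : ‖Complex.exp ((t:ℂ) * μ)‖ = Real.exp (t * μ.re) := by
      rw [Complex.norm_exp]
      congr 1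
      simp [Complex.mul_re]
    rw [habs]
    have hnorm : ‖∑ j ∈ Finset.range k, (((Nat.factorial j : ℂ))⁻¹ * (t:ℂ) ^ j) • (N ^ j *ᵥ x)‖
        ≤ Real.exp (ε * t) * C := by
      calc ‖∑ j ∈ Finset.range k, (((Nat.factorial j : ℂ))⁻¹ * (t:ℂ) ^ j) • (N ^ j *ᵥ x)‖
          ≤ ∑ j ∈ Finset.range k, ‖(((Nat.factorial j : ℂ))⁻¹ * (t:ℂ) ^ j) • (N ^ j *ᵥ x)‖ :=
            norm_sum_le _ _
        _ ≤ ∑ j ∈ Finset.range k, (Real.exp (ε * t) * (ε⁻¹) ^ j) * ‖N ^ j *ᵥ x‖ := by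
            refine Finset.sum_le_sum fun j _ => ?_
            rw [norm_smul]
            refine mul_le_mul_of_nonneg_right ?_ (norm_nonneg _)
            have h2 : ‖((Nat.factorial j : ℂ))⁻¹ * (t:ℂ) ^ j‖ = (Nat.factorial j : ℝ)⁻¹ * t ^ j := by
              rw [norm_mul, norm_inv, norm_pow, Complex.norm_natCast, Complex.norm_real,
                Real.norm_of_nonneg ht]
            rw [h2]
            -- (j!)⁻¹ * t ^ j ≤ exp (ε t) * ε⁻¹ ^ j
            have h3 : (ε * t) ^ j / (Nat.factorial j) ≤ Real.exp (ε * t) :=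
              Real.pow_div_factorial_le_exp _ (by positivity) j
            have h4 : (Nat.factorial j : ℝ)⁻¹ * t ^ j = ((ε * t) ^ j / (Nat.factorial j)) * (ε⁻¹) ^ j := by
              field_simp [mul_pow]
              rw [← mul_pow, mul_comm ε t, mul_assoc, mul_one_div_cancel hε.ne', mul_one]
            rw [h4]
            refine mul_le_mul_of_nonneg_right h3 (by positivity)
        _ = Real.exp (ε * t) * C := by rw [hC, Finset.mul_sum]; exact Finset.sum_congr rfl fun j _ => by ring
    calc Real.exp (t * μ.re) * ‖∑ j ∈ Finset.range k, (((Nat.factorial j : ℂ))⁻¹ * (t:ℂ) ^ j) • (N ^ j *ᵥ x)‖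
        ≤ Real.exp (t * (-(2*ε))) * (Real.exp (ε * t) * C) := by
          have h0 : (0:ℝ) ≤ Real.exp (t * μ.re) := (Real.exp_pos _).le
          refine mul_le_mul (Real.exp_le_exp.2 ?_) hnorm (norm_nonneg _) (Real.exp_pos _).le
          exact mul_le_mul_of_nonneg_left hμ ht
      _ = C * Real.exp (-(ε * t)) := by
          rw [show Real.exp (t * -(2*ε)) * (Real.exp (ε * t) * C)
              = C * (Real.exp (t * -(2*ε)) * Real.exp (ε * t)) by ring, ← Real.exp_add]
          congr 2
          ring
  · exact ⟨0, by simp [Matrix.mulVec_zero]⟩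
  · rintro x y ⟨Cx, hCx⟩ ⟨Cy, hCy⟩
    refine ⟨Cx + Cy, fun t ht => ?_⟩
    rw [Matrix.mulVec_add, add_mul]
    exact (norm_add_le _ _).trans (add_le_add (hCx t ht) (hCy t ht))


lemma eps_gap (Ac : Matrix (Fin d) (Fin d) ℂ)
    (h : ∀ μ ∈ spectrum ℂ Ac, μ.re < 0) :
    ∃ ε : ℝ, 0 < ε ∧ ∀ μ ∈ spectrum ℂ Ac, μ.re ≤ -(2*ε) := by
  have hfin : (spectrum ℂ Ac).Finite := Ac.finite_spectrum
  set Rf : Finset ℝ := hfin.toFinset.image Complex.re with hRf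
  rcases Rf.eq_empty_or_nonempty with hemp | hne
  · refine ⟨1, one_pos, fun μ hμ => absurd ?_ (by simp [hemp] : μ.re ∉ Rf)⟩
    rw [hRf]
    exact Finset.mem_image_of_mem _ (hfin.mem_toFinset.mpr hμ)
  · set m := Rf.max' hne with hm
    have hmem : m ∈ Rf := Rf.max'_mem hne
    rw [hRf, Finset.mem_image] at hmem
    obtain ⟨μ, hμ, hμm⟩ := hmem
    have hm0 : m < 0 := hμm ▸ h μ (hfin.mem_toFinset.mp hμ)
    refine ⟨-m/2, by linarith, fun ν hν => ?_⟩
    have : ν.re ≤ m := Finset.le_max' _ _ (Finset.mem_image_of_mem _ (hfin.mem_toFinset.mpr hν))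
    linarith

lemma exp_map_ofReal (A : Matrix (Fin d) (Fin d) ℝ) (t : ℝ) :
    (exp (t • A)).map Complex.ofReal = exp ((t : ℂ) • A.map Complex.ofReal) := by
  have hf : Continuous fun M : Matrix (Fin d) (Fin d) ℝ => M.map (Complex.ofReal : ℝ → ℂ) :=
    continuous_id.matrix_map Complex.continuous_ofReal
  have h1 : (Complex.ofRealHom.mapMatrix : Matrix (Fin d) (Fin d) ℝ →+* _) (exp (t • A))
      = exp (Complex.ofRealHom.mapMatrix (t • A)) :=
    map_exp (Complex.ofRealHom.mapMatrix : Matrix (Fin d) (Fin d) ℝ →+* _) hf (t • A)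
  have h2 : (Complex.ofRealHom.mapMatrix : Matrix (Fin d) (Fin d) ℝ →+* _) (t • A)
      = (t : ℂ) • A.map Complex.ofReal := by
    ext i j
    simp [RingHom.mapMatrix_apply, Complex.real_smul]
  have h3 : (exp : Matrix (Fin d) (Fin d) ℂ → _) = exp := rfl
  calc (exp (t • A)).map Complex.ofReal
      = (Complex.ofRealHom.mapMatrix : Matrix (Fin d) (Fin d) ℝ →+* _) (exp (t • A)) := rfl
    _ = exp ((t : ℂ) • A.map Complex.ofReal) := by rw [h1, h2]
    _ = exp ((t : ℂ) • A.map Complex.ofReal) := by rw [h3]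

lemma decay_entry (A : Matrix (Fin d) (Fin d) ℝ) {ε : ℝ} (hε : 0 < ε)
    (hspec : ∀ μ ∈ spectrum ℂ (A.map Complex.ofReal), μ.re ≤ -(2*ε)) :
    ∃ C : ℝ, 0 ≤ C ∧ ∀ t : ℝ, 0 ≤ t → ∀ i j, |exp (t • A) i j| ≤ C * Real.exp (-(ε*t)) := by
  set Ac := A.map Complex.ofReal with hAc
  have hvec : ∀ j : Fin d, ∃ C : ℝ, ∀ t : ℝ, 0 ≤ t →
      ‖exp ((t : ℂ) • Ac) *ᵥ Pi.single j 1‖ ≤ C * Real.exp (-(ε * t)) :=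
    fun j => decay_vec Ac hε hspec _
  choose Cf hCf using hvec
  have hCf0 : ∀ j, 0 ≤ Cf j := by
    intro j
    have := hCf j 0 le_rfl
    simpa using (norm_nonneg _).trans this
  refine ⟨∑ j, Cf j, Finset.sum_nonneg fun j _ => hCf0 j, fun t ht i j => ?_⟩
  have hentry : |exp (t • A) i j| = ‖(exp ((t:ℂ) • Ac)) i j‖ := by
    rw [← exp_map_ofReal]
    simp [Matrix.map_apply]
  rw [hentry]
  have h1 : (exp ((t:ℂ) • Ac)) i j = (exp ((t:ℂ) • Ac) *ᵥ Pi.single j 1) i := by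
    rw [Matrix.mulVec_single]
    simp
  rw [h1]
  calc ‖(exp ((t:ℂ) • Ac) *ᵥ Pi.single j 1) i‖
      ≤ ‖exp ((t:ℂ) • Ac) *ᵥ Pi.single j 1‖ := norm_le_pi_norm _ i
    _ ≤ Cf j * Real.exp (-(ε * t)) := hCf j t ht
    _ ≤ (∑ j', Cf j') * Real.exp (-(ε * t)) := by
        refine mul_le_mul_of_nonneg_right ?_ (Real.exp_pos _).le
        exact Finset.single_le_sum (fun j' _ => hCf0 j') (Finset.mem_univ j)
    _ = (∑ j', Cf j') * Real.exp (-(ε*t)) := by norm_num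


/-- entry of a matrix as continuous linear map -/
noncomputable def entryCLM (i j : Fin d) : Matrix (Fin d) (Fin d) ℝ →L[ℝ] ℝ :=
  LinearMap.toContinuousLinearMap
    { toFun := fun M : Matrix (Fin d) (Fin d) ℝ => M i j
      map_add' := fun _ _ => rfl
      map_smul' := fun _ _ => rfl }

section Real

variable (A : Matrix (Fin d) (Fin d) ℝ)

/-- the matrix exponential path -/
noncomputable def E (t : ℝ) : Matrix (Fin d) (Fin d) ℝ := exp (t • A)

/-- the integrand -/
noncomputable def g (t : ℝ) : Matrix (Fin d) (Fin d) ℝ := (E A t)ᵀ * E A t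

/-- its derivative -/
noncomputable def Dmat (t : ℝ) : Matrix (Fin d) (Fin d) ℝ := Aᵀ * g A t + g A t * A

lemma hE_deriv (t : ℝ) : HasDerivAt (E A) (E A t * A) t := hasDerivAt_exp_smul_const A t

lemma hEntry_deriv (i j : Fin d) (t : ℝ) :
    HasDerivAt (fun u => E A u i j) ((E A t * A) i j) t :=
  (entryCLM i j).hasFDerivAt.comp_hasDerivAt t (hE_deriv A t)

lemma hEntry_cont (i j : Fin d) : Continuous (fun u => E A u i j) :=
  continuous_iff_continuousAt.mpr fun t => (hEntry_deriv A i j t).continuousAt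

lemma g_entry (t : ℝ) (i j : Fin d) : g A t i j = ∑ k, E A t k i * E A t k j := by
  simp [g, Matrix.mul_apply, Matrix.transpose_apply]

lemma g_cont (i j : Fin d) : Continuous (fun u => g A u i j) := by
  simp only [g_entry]
  exact continuous_finset_sum _ fun k _ => (hEntry_cont A k i).mul (hEntry_cont A k j)

lemma Dmat_entry (t : ℝ) (i j : Fin d) :
    Dmat A t i j = ∑ k, ((E A t * A) k i * E A t k j + E A t k i * (E A t * A) k j) := by
  have h1 : Dmat A t = (E A t * A)ᵀ * E A t + (E A t)ᵀ * (E A t * A) := by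
    rw [Dmat, g, Matrix.transpose_mul, Matrix.mul_assoc, ← Matrix.mul_assoc]
  rw [h1]
  simp [Matrix.add_apply, Matrix.mul_apply, Matrix.transpose_apply, Finset.sum_add_distrib]
  refine Finset.sum_congr rfl fun k _ => ?_
  congr 1
  exact Finset.sum_congr rfl fun l _ => mul_comm _ _

lemma Dmat_cont (i j : Fin d) : Continuous (fun u => Dmat A u i j) := by
  simp only [Dmat_entry]
  refine continuous_finset_sum _ fun k _ => Continuous.add ?_ ?_
  · refine Continuous.mul ?_ (hEntry_cont A k j)
    · simp only [Matrix.mul_apply]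
      exact continuous_finset_sum _ fun l _ => (hEntry_cont A k l).mul continuous_const
  · refine Continuous.mul (hEntry_cont A k i) ?_
    · simp only [Matrix.mul_apply]
      exact continuous_finset_sum _ fun l _ => (hEntry_cont A k l).mul continuous_const

lemma g_deriv (i j : Fin d) (t : ℝ) :
    HasDerivAt (fun u => g A u i j) (Dmat A t i j) t := by
  simp only [g_entry, Dmat_entry]
  exact HasDerivAt.fun_sum fun k _ => (hEntry_deriv A k i t).mul (hEntry_deriv A k j t)

end Real

section Decay

variable (A : Matrix (Fin d) (Fin d) ℝ) {ε C : ℝ}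

/-- bound on entries of g -/
lemma g_bound (hε : 0 < ε) (hC : 0 ≤ C)
    (hdec : ∀ t : ℝ, 0 ≤ t → ∀ i j, |E A t i j| ≤ C * Real.exp (-(ε*t)))
    {t : ℝ} (ht : 0 ≤ t) (i j : Fin d) :
    |g A t i j| ≤ (d * C^2) * Real.exp (-(2*ε)*t) := by
  rw [g_entry]
  calc |∑ k, E A t k i * E A t k j| ≤ ∑ k, |E A t k i * E A t k j| := Finset.abs_sum_le_sum_abs _ _
    _ ≤ ∑ _k : Fin d, (C * Real.exp (-(ε*t))) * (C * Real.exp (-(ε*t))) := by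
        refine Finset.sum_le_sum fun k _ => ?_
        rw [abs_mul]
        exact mul_le_mul (hdec t ht k i) (hdec t ht k j) (abs_nonneg _)
          (by positivity)
    _ = (d * C^2) * Real.exp (-(2*ε)*t) := by
        rw [Finset.sum_const, Finset.card_univ, Fintype.card_fin, nsmul_eq_mul,
          show C * Real.exp (-(ε*t)) * (C * Real.exp (-(ε*t)))
            = C^2 * (Real.exp (-(ε*t)) * Real.exp (-(ε*t))) by ring, ← Real.exp_add,
          show (-(ε*t)) + (-(ε*t)) = -(2*ε)*t by ring]
        ring

lemma exp_neg_tendsto (hε : 0 < ε) (K : ℝ) :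
    Tendsto (fun t : ℝ => K * Real.exp (-(2*ε)*t)) atTop (nhds 0) := by
  have h1 : Tendsto (fun t : ℝ => -(2*ε)*t) atTop atBot := by
    apply Tendsto.const_mul_atTop_of_neg (by linarith : -(2*ε) < 0) tendsto_id
  have h2 := Real.tendsto_exp_atBot.comp h1
  simpa using h2.const_mul K

lemma exp_decay_integrable (hε : 0 < ε) (K : ℝ) :
    IntegrableOn (fun t : ℝ => K * Real.exp (-(2*ε)*t)) (Ioi 0) := by
  exact (exp_neg_integrableOn_Ioi 0 (by linarith : (0:ℝ) < 2*ε)).const_mul K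

lemma integrable_of_bound {f : ℝ → ℝ} (hε : 0 < ε) (K : ℝ) (hcont : Continuous f)
    (hb : ∀ t : ℝ, 0 ≤ t → |f t| ≤ K * Real.exp (-(2*ε)*t)) :
    IntegrableOn f (Ioi 0) := by
  refine Integrable.mono' (exp_decay_integrable hε K) hcont.aestronglyMeasurable ?_
  rw [ae_restrict_iff' measurableSet_Ioi]
  exact ae_of_all _ fun t ht => by simpa [Real.norm_eq_abs] using hb t ht.le

end Decay

end StmtTwo

namespace StmtTwo

section MDef

variable (A : Matrix (Fin d) (Fin d) ℝ) {ε C : ℝ}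

/-- the Lyapunov solution -/
noncomputable def Mmat : Matrix (Fin d) (Fin d) ℝ :=
  Matrix.of fun i j => ∫ t in Ioi (0:ℝ), g A t i j

lemma hInt_g (hε : 0 < ε) (hC : 0 ≤ C)
    (hdec : ∀ t : ℝ, 0 ≤ t → ∀ i j, |E A t i j| ≤ C * Real.exp (-(ε*t))) (i j : Fin d) :
    IntegrableOn (fun t => g A t i j) (Ioi 0) :=
  integrable_of_bound hε _ (g_cont A i j) (fun t ht => g_bound A hε hC hdec ht i j)

lemma Dmat_eq (t : ℝ) (i j : Fin d) :
    Dmat A t i j = (∑ l, A l i * g A t l j) + (∑ l, g A t i l * A l j) := by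
  simp [Dmat, Matrix.add_apply, Matrix.mul_apply, Matrix.transpose_apply]

lemma abs_entry_le (l i : Fin d) : |A l i| ≤ ∑ i', ∑ j', |A i' j'| := by
  calc |A l i| ≤ ∑ j', |A l j'| :=
        Finset.single_le_sum (f := fun j' => |A l j'|) (fun j' _ => abs_nonneg _)
          (Finset.mem_univ i)
    _ ≤ ∑ i', ∑ j', |A i' j'| :=
        Finset.single_le_sum (f := fun i' => ∑ j', |A i' j'|)
          (fun i' _ => Finset.sum_nonneg fun j' _ => abs_nonneg _) (Finset.mem_univ l)

lemma Dmat_bound (hε : 0 < ε) (hC : 0 ≤ C)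
    (hdec : ∀ t : ℝ, 0 ≤ t → ∀ i j, |E A t i j| ≤ C * Real.exp (-(ε*t)))
    {t : ℝ} (ht : 0 ≤ t) (i j : Fin d) :
    |Dmat A t i j| ≤ (2*d*(∑ i', ∑ j', |A i' j'|)*(d * C^2)) * Real.exp (-(2*ε)*t) := by
  set aB := ∑ i', ∑ j', |A i' j'| with haB
  have haB0 : 0 ≤ aB := Finset.sum_nonneg fun i' _ => Finset.sum_nonneg fun j' _ => abs_nonneg _
  have hK : (0:ℝ) ≤ d * C^2 := by positivity
  rw [Dmat_eq]
  have h1 : ∀ l : Fin d, |A l i * g A t l j| ≤ aB * ((d * C^2) * Real.exp (-(2*ε)*t)) := by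
    intro l
    rw [abs_mul]
    exact mul_le_mul (abs_entry_le A l i) (g_bound A hε hC hdec ht l j) (abs_nonneg _) haB0
  have h2 : ∀ l : Fin d, |g A t i l * A l j| ≤ aB * ((d * C^2) * Real.exp (-(2*ε)*t)) := by
    intro l
    rw [abs_mul, mul_comm]
    exact mul_le_mul (abs_entry_le A l j) (g_bound A hε hC hdec ht i l) (abs_nonneg _) haB0
  calc |(∑ l, A l i * g A t l j) + (∑ l, g A t i l * A l j)|
      ≤ |∑ l, A l i * g A t l j| + |∑ l, g A t i l * A l j| := abs_add_le _ _
    _ ≤ (∑ l, |A l i * g A t l j|) + (∑ l, |g A t i l * A l j|) :=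
        add_le_add (Finset.abs_sum_le_sum_abs _ _) (Finset.abs_sum_le_sum_abs _ _)
    _ ≤ (∑ _l : Fin d, aB * ((d * C^2) * Real.exp (-(2*ε)*t)))
        + (∑ _l : Fin d, aB * ((d * C^2) * Real.exp (-(2*ε)*t))) :=
        add_le_add (Finset.sum_le_sum fun l _ => h1 l) (Finset.sum_le_sum fun l _ => h2 l)
    _ = (2*d*aB*(d * C^2)) * Real.exp (-(2*ε)*t) := by
        rw [Finset.sum_const, Finset.card_univ, Fintype.card_fin, nsmul_eq_mul]
        ring

lemma hInt_D (hε : 0 < ε) (hC : 0 ≤ C)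
    (hdec : ∀ t : ℝ, 0 ≤ t → ∀ i j, |E A t i j| ≤ C * Real.exp (-(ε*t))) (i j : Fin d) :
    IntegrableOn (fun t => Dmat A t i j) (Ioi 0) :=
  integrable_of_bound hε _ (Dmat_cont A i j) (fun t ht => Dmat_bound A hε hC hdec ht i j)

lemma g_zero : g A 0 = 1 := by
  have hE0 : E A 0 = 1 := by rw [E, zero_smul, exp_zero]
  rw [g, hE0]
  simp

lemma hFTC (hε : 0 < ε) (hC : 0 ≤ C)
    (hdec : ∀ t : ℝ, 0 ≤ t → ∀ i j, |E A t i j| ≤ C * Real.exp (-(ε*t))) (i j : Fin d) :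
    (∫ t in Ioi (0:ℝ), Dmat A t i j) = -(1 : Matrix (Fin d) (Fin d) ℝ) i j := by
  have htend : Tendsto (fun t => g A t i j) atTop (nhds 0) := by
    refine squeeze_zero_norm' ?_ (exp_neg_tendsto hε (d * C^2))
    filter_upwards [eventually_ge_atTop (0:ℝ)] with t ht
    simpa [Real.norm_eq_abs] using g_bound A hε hC hdec ht i j
  have h := integral_Ioi_of_hasDerivAt_of_tendsto' (a := (0:ℝ))
    (fun t _ => g_deriv A i j t) (hInt_D A hε hC hdec i j) htend
  rw [h, g_zero]
  simp

lemma lyap (hε : 0 < ε) (hC : 0 ≤ C)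
    (hdec : ∀ t : ℝ, 0 ≤ t → ∀ i j, |E A t i j| ≤ C * Real.exp (-(ε*t))) :
    Aᵀ * Mmat A + Mmat A * A = -1 := by
  ext i j
  have hint := hInt_g A hε hC hdec
  have hint1 : ∀ l : Fin d, IntegrableOn (fun t => A l i * g A t l j) (Ioi 0) :=
    fun l => (hint l j).const_mul _
  have hint2 : ∀ l : Fin d, IntegrableOn (fun t => g A t i l * A l j) (Ioi 0) :=
    fun l => (hint i l).mul_const _
  have hs1 : IntegrableOn (fun t => ∑ l, A l i * g A t l j) (Ioi 0) :=
    integrable_finset_sum _ fun l _ => hint1 l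
  have hs2 : IntegrableOn (fun t => ∑ l, g A t i l * A l j) (Ioi 0) :=
    integrable_finset_sum _ fun l _ => hint2 l
  have key : (Aᵀ * Mmat A + Mmat A * A) i j = ∫ t in Ioi (0:ℝ), Dmat A t i j := by
    calc (Aᵀ * Mmat A + Mmat A * A) i j
        = (∑ l, A l i * ∫ t in Ioi (0:ℝ), g A t l j)
          + (∑ l, (∫ t in Ioi (0:ℝ), g A t i l) * A l j) := by
          simp [Matrix.add_apply, Matrix.mul_apply, Matrix.transpose_apply, Mmat]
      _ = (∑ l, ∫ t in Ioi (0:ℝ), A l i * g A t l j)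
          + (∑ l, ∫ t in Ioi (0:ℝ), g A t i l * A l j) := by
          congr 1
          · exact Finset.sum_congr rfl fun l _ => (integral_const_mul _ _).symm
          · exact Finset.sum_congr rfl fun l _ => (integral_mul_const _ _).symm
      _ = (∫ t in Ioi (0:ℝ), ∑ l, A l i * g A t l j)
          + (∫ t in Ioi (0:ℝ), ∑ l, g A t i l * A l j) := by
          rw [integral_finset_sum _ fun l _ => hint1 l, integral_finset_sum _ fun l _ => hint2 l]
      _ = ∫ t in Ioi (0:ℝ), ((∑ l, A l i * g A t l j) + (∑ l, g A t i l * A l j)) := by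
          rw [← integral_add hs1 hs2]
      _ = ∫ t in Ioi (0:ℝ), Dmat A t i j := by
          refine integral_congr_ae (ae_of_all _ fun t => ?_)
          simpa using (Dmat_eq A t i j).symm
  rw [key, hFTC A hε hC hdec i j]
  simp

lemma quad_eq (hε : 0 < ε) (hC : 0 ≤ C)
    (hdec : ∀ t : ℝ, 0 ≤ t → ∀ i j, |E A t i j| ≤ C * Real.exp (-(ε*t))) (x : Fin d → ℝ) :
    x ⬝ᵥ (Mmat A *ᵥ x) = ∫ t in Ioi (0:ℝ), (∑ k, (E A t *ᵥ x) k * (E A t *ᵥ x) k) := by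
  have hpt : ∀ t : ℝ, (∑ i, ∑ j, x i * g A t i j * x j) = ∑ k, (E A t *ᵥ x) k * (E A t *ᵥ x) k := by
    intro t
    have h1 : x ⬝ᵥ (g A t *ᵥ x) = ∑ k, (E A t *ᵥ x) k * (E A t *ᵥ x) k := by
      rw [g, ← Matrix.mulVec_mulVec, Matrix.dotProduct_mulVec x (E A t)ᵀ _,
        Matrix.vecMul_transpose]
      simp [dotProduct]
    rw [← h1]
    simp [dotProduct, Matrix.mulVec, Finset.mul_sum, mul_assoc]
  have hint : ∀ i j : Fin d, IntegrableOn (fun t => x i * g A t i j * x j) (Ioi 0) :=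
    fun i j => ((hInt_g A hε hC hdec i j).const_mul _).mul_const _
  calc x ⬝ᵥ (Mmat A *ᵥ x)
      = ∑ i, ∑ j, x i * (∫ t in Ioi (0:ℝ), g A t i j) * x j := by
        simp [dotProduct, Matrix.mulVec, Finset.mul_sum, Mmat, mul_assoc]
    _ = ∑ i, ∑ j, ∫ t in Ioi (0:ℝ), x i * g A t i j * x j := by
        refine Finset.sum_congr rfl fun i _ => Finset.sum_congr rfl fun j _ => ?_
        rw [← integral_const_mul, ← integral_mul_const]
    _ = ∑ i, ∫ t in Ioi (0:ℝ), ∑ j, x i * g A t i j * x j :=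
        Finset.sum_congr rfl fun i _ => (integral_finset_sum _ fun j _ => hint i j).symm
    _ = ∫ t in Ioi (0:ℝ), ∑ i, ∑ j, x i * g A t i j * x j :=
        (integral_finset_sum _ fun i _ => integrable_finset_sum _ fun j _ => hint i j).symm
    _ = ∫ t in Ioi (0:ℝ), (∑ k, (E A t *ᵥ x) k * (E A t *ᵥ x) k) := by
        exact integral_congr_ae (ae_of_all _ fun t => hpt t)

end MDef

end StmtTwo

namespace StmtTwo

section MProps

variable (A : Matrix (Fin d) (Fin d) ℝ) {ε C : ℝ}

lemma quad_pt (t : ℝ) (x : Fin d → ℝ) :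
    x ⬝ᵥ (g A t *ᵥ x) = ∑ k, (E A t *ᵥ x) k * (E A t *ᵥ x) k := by
  rw [g, ← Matrix.mulVec_mulVec, Matrix.dotProduct_mulVec x (E A t)ᵀ _,
    Matrix.vecMul_transpose]
  simp [dotProduct]

lemma q_integrable (hε : 0 < ε) (hC : 0 ≤ C)
    (hdec : ∀ t : ℝ, 0 ≤ t → ∀ i j, |E A t i j| ≤ C * Real.exp (-(ε*t))) (x : Fin d → ℝ) :
    IntegrableOn (fun t => ∑ k, (E A t *ᵥ x) k * (E A t *ᵥ x) k) (Ioi 0) := by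
  have heq : (fun t => ∑ k, (E A t *ᵥ x) k * (E A t *ᵥ x) k)
      = fun t => ∑ i, ∑ j, x i * g A t i j * x j := by
    funext t
    rw [← quad_pt]
    simp [dotProduct, Matrix.mulVec, Finset.mul_sum, mul_assoc]
  rw [heq]
  exact integrable_finset_sum _ fun i _ => integrable_finset_sum _ fun j _ =>
    ((hInt_g A hε hC hdec i j).const_mul _).mul_const _

lemma Mmat_symm : (Mmat A).IsSymm := by
  apply Matrix.IsSymm.ext
  intro i j
  show (∫ t in Ioi (0:ℝ), g A t j i) = ∫ t in Ioi (0:ℝ), g A t i j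
  refine integral_congr_ae (ae_of_all _ fun t => ?_)
  show g A t j i = g A t i j
  rw [g_entry, g_entry]
  exact Finset.sum_congr rfl fun k _ => mul_comm _ _

lemma Mmat_psd_form (hε : 0 < ε) (hC : 0 ≤ C)
    (hdec : ∀ t : ℝ, 0 ≤ t → ∀ i j, |E A t i j| ≤ C * Real.exp (-(ε*t))) (x : Fin d → ℝ) :
    0 ≤ x ⬝ᵥ (Mmat A *ᵥ x) := by
  rw [quad_eq A hε hC hdec x]
  exact setIntegral_nonneg measurableSet_Ioi fun t _ =>
    Finset.sum_nonneg fun k _ => mul_self_nonneg _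

lemma E_neg_mul (t : ℝ) : E A (-t) * E A t = 1 := by
  have hcomm : Commute ((-t) • A) (t • A) := ((Commute.refl A).smul_right t).smul_left (-t)
  rw [E, E, ← Matrix.exp_add_of_commute _ _ hcomm, ← add_smul]
  norm_num

lemma Mmat_lower (hε : 0 < ε) (hC : 0 ≤ C)
    (hdec : ∀ t : ℝ, 0 ≤ t → ∀ i j, |E A t i j| ≤ C * Real.exp (-(ε*t))) :
    ∃ R : ℝ, 0 < R ∧ ∀ x : Fin d → ℝ, (∑ i, x i * x i) ≤ R * (x ⬝ᵥ (Mmat A *ᵥ x)) := by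
  set h : ℝ → ℝ := fun t => ∑ i, ∑ k, E A (-t) i k * E A (-t) i k with hh
  have hcont : Continuous h := by
    refine continuous_finset_sum _ fun i _ => continuous_finset_sum _ fun k _ => ?_
    exact ((hEntry_cont A i k).comp continuous_neg).mul ((hEntry_cont A i k).comp continuous_neg)
  obtain ⟨z, hz, hzmax⟩ := isCompact_Icc.exists_isMaxOn
    (Set.nonempty_Icc.mpr (by norm_num : (0:ℝ) ≤ 1)) hcont.continuousOn
  set R : ℝ := h z + 1 with hR
  have hh0 : ∀ t : ℝ, 0 ≤ h t := fun t =>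
    Finset.sum_nonneg fun i _ => Finset.sum_nonneg fun k _ => mul_self_nonneg _
  have hRpos : 0 < R := by have := hh0 z; linarith
  refine ⟨R, hRpos, fun x => ?_⟩
  set q : ℝ → ℝ := fun t => ∑ k, (E A t *ᵥ x) k * (E A t *ᵥ x) k with hq
  have hq0 : ∀ t, 0 ≤ q t := fun t => Finset.sum_nonneg fun k _ => mul_self_nonneg _
  -- pointwise bound on [0,1]
  have hpt : ∀ t ∈ Icc (0:ℝ) 1, (∑ i, x i * x i) ≤ R * q t := by
    intro t ht
    have hxi : ∀ i, x i = ∑ k, E A (-t) i k * (E A t *ᵥ x) k := by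
      intro i
      have : x = E A (-t) *ᵥ (E A t *ᵥ x) := by
        rw [Matrix.mulVec_mulVec, E_neg_mul, Matrix.one_mulVec]
      conv_lhs => rw [this]
      simp [Matrix.mulVec, dotProduct]
    have hCS : ∀ i : Fin d, x i * x i ≤ (∑ k, E A (-t) i k * E A (-t) i k) * q t := by
      intro i
      have h1 : (x i) ^ 2 ≤ (∑ k, (E A (-t) i k)^2) * (∑ k, ((E A t *ᵥ x) k)^2) := by
        rw [hxi i]
        exact Finset.sum_mul_sq_le_sq_mul_sq _ _ _
      have h2 : (∑ k, (E A (-t) i k)^2) = ∑ k, E A (-t) i k * E A (-t) i k := by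
        exact Finset.sum_congr rfl fun k _ => sq (E A (-t) i k) ▸ by ring
      have h3 : (∑ k, ((E A t *ᵥ x) k)^2) = q t :=
        Finset.sum_congr rfl fun k _ => by ring
      calc x i * x i = (x i)^2 := by ring
        _ ≤ _ := h1
        _ = (∑ k, E A (-t) i k * E A (-t) i k) * q t := by rw [h2, h3]
    calc (∑ i, x i * x i) ≤ ∑ i, (∑ k, E A (-t) i k * E A (-t) i k) * q t :=
          Finset.sum_le_sum fun i _ => hCS i
      _ = h t * q t := by rw [hh, Finset.sum_mul]
      _ ≤ R * q t := by
          refine mul_le_mul_of_nonneg_right ?_ (hq0 t)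
          have := hzmax ht
          rw [hR]
          have h2 : h t ≤ h z := this
          linarith
  -- integrate the bound over (0,1]
  have hqint : IntegrableOn q (Ioi 0) := q_integrable A hε hC hdec x
  have h1 : (∑ i, x i * x i) / R ≤ ∫ t in Ioc (0:ℝ) 1, q t := by
    have hconst : IntegrableOn (fun _ : ℝ => (∑ i, x i * x i) / R) (Ioc 0 1) := by
      exact integrableOn_const (by rw [Real.volume_Ioc]; exact ENNReal.ofReal_ne_top)
    have hle : ∫ t in Ioc (0:ℝ) 1, (∑ i, x i * x i) / R ≤ ∫ t in Ioc (0:ℝ) 1, q t := by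
      refine setIntegral_mono_on hconst (hqint.mono_set Ioc_subset_Ioi_self)
        measurableSet_Ioc fun t ht => ?_
      rw [div_le_iff₀ hRpos, mul_comm]
      exact hpt t ⟨ht.1.le, ht.2⟩
    calc (∑ i, x i * x i) / R = ∫ t in Ioc (0:ℝ) 1, (∑ i, x i * x i) / R := by
          rw [setIntegral_const]
          rw [Real.volume_real_Ioc]
          norm_num
      _ ≤ _ := hle
  have h2 : ∫ t in Ioc (0:ℝ) 1, q t ≤ ∫ t in Ioi (0:ℝ), q t := by
    refine setIntegral_mono_set hqint ?_ (HasSubset.Subset.eventuallyLE Ioc_subset_Ioi_self)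
    rw [EventuallyLE]
    rw [ae_restrict_iff' measurableSet_Ioi]
    exact ae_of_all _ fun t _ => hq0 t
  have h3 : x ⬝ᵥ (Mmat A *ᵥ x) = ∫ t in Ioi (0:ℝ), q t := quad_eq A hε hC hdec x
  calc (∑ i, x i * x i) = (∑ i, x i * x i) / R * R := by field_simp
    _ ≤ (∫ t in Ioc (0:ℝ) 1, q t) * R := mul_le_mul_of_nonneg_right h1 hRpos.le
    _ ≤ (∫ t in Ioi (0:ℝ), q t) * R := mul_le_mul_of_nonneg_right h2 hRpos.le
    _ = R * (x ⬝ᵥ (Mmat A *ᵥ x)) := by rw [h3, mul_comm]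

end MProps

section Generic

lemma quad_upper (N : Matrix (Fin d) (Fin d) ℝ) (x : Fin d → ℝ) :
    x ⬝ᵥ (N *ᵥ x) ≤ (∑ i, ∑ j, |N i j|) * (∑ i, x i * x i) := by
  have habs : ∀ i j : Fin d, |x i * x j| ≤ ∑ k, x k * x k := by
    intro i j
    have hi : x i * x i ≤ ∑ k, x k * x k :=
      Finset.single_le_sum (f := fun k => x k * x k) (fun k _ => mul_self_nonneg _)
        (Finset.mem_univ i)
    have hj : x j * x j ≤ ∑ k, x k * x k :=
      Finset.single_le_sum (f := fun k => x k * x k) (fun k _ => mul_self_nonneg _)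
        (Finset.mem_univ j)
    rw [abs_le]
    constructor <;> nlinarith [sq_nonneg (x i - x j), sq_nonneg (x i + x j)]
  calc x ⬝ᵥ (N *ᵥ x) = ∑ i, ∑ j, N i j * (x i * x j) := by
        simp only [dotProduct, Matrix.mulVec, Finset.mul_sum]
        exact Finset.sum_congr rfl fun i _ => Finset.sum_congr rfl fun j _ => by ring
    _ ≤ ∑ i, ∑ j, |N i j| * (∑ k, x k * x k) := by
        refine Finset.sum_le_sum fun i _ => Finset.sum_le_sum fun j _ => ?_
        calc N i j * (x i * x j) ≤ |N i j * (x i * x j)| := le_abs_self _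
          _ = |N i j| * |x i * x j| := abs_mul _ _
          _ ≤ |N i j| * (∑ k, x k * x k) :=
              mul_le_mul_of_nonneg_left (habs i j) (abs_nonneg _)
    _ = (∑ i, ∑ j, |N i j|) * (∑ i, x i * x i) := by
        simp [Finset.sum_mul]

lemma isHermitian_of_isSymm {N : Matrix (Fin d) (Fin d) ℝ} (h : N.IsSymm) : N.IsHermitian := by
  rw [Matrix.IsHermitian, Matrix.conjTranspose_eq_transpose_of_trivial]
  exact h

end Generic

end StmtTwo

open StmtTwo in
/-- if `A₁ + B₁K` is Hurwitz then there exist a symmetric positive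
definite `M` and `λ > 0` with `M ≥ C₁ᵀC₁` and
`(A₁+B₁K)ᵀM + M(A₁+B₁K) ≤ −2λM` in the Loewner order. -/
theorem stmt_2 {n p m : ℕ}
    (A₁ : Matrix (Fin n) (Fin n) ℝ) (B₁ : Matrix (Fin n) (Fin p) ℝ)
    (K : Matrix (Fin p) (Fin n) ℝ) (C₁ : Matrix (Fin m) (Fin n) ℝ)
    (hHurwitz : ∀ μ ∈ spectrum ℂ ((A₁ + B₁ * K).map (Complex.ofReal)), μ.re < 0) :
    ∃ (M : Matrix (Fin n) (Fin n) ℝ) (lam : ℝ),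
      M.IsSymm ∧ M.PosDef ∧ 0 < lam ∧
      (M - C₁ᵀ * C₁).PosSemidef ∧
      ((-(2 * lam)) • M - ((A₁ + B₁ * K)ᵀ * M + M * (A₁ + B₁ * K))).PosSemidef := by
  set A := A₁ + B₁ * K with hA
  obtain ⟨ε, hε, hspec⟩ := eps_gap (A.map Complex.ofReal) hHurwitz
  obtain ⟨C, hC, hdec'⟩ := decay_entry A hε hspec
  have hdec : ∀ t : ℝ, 0 ≤ t → ∀ i j, |E A t i j| ≤ C * Real.exp (-(ε*t)) := hdec'
  set M0 := Mmat A with hM0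
  have hsymm0 : M0.IsSymm := Mmat_symm A
  have hly : Aᵀ * M0 + M0 * A = -1 := lyap A hε hC hdec
  have hpsd0 : ∀ x, 0 ≤ x ⬝ᵥ (M0 *ᵥ x) := Mmat_psd_form A hε hC hdec
  obtain ⟨R, hR, hlow'⟩ := Mmat_lower A hε hC hdec
  set S : (Fin n → ℝ) → ℝ := fun x => ∑ i, x i * x i with hS
  have hlow : ∀ x : Fin n → ℝ, S x ≤ R * (x ⬝ᵥ (M0 *ᵥ x)) := hlow'
  have hS0 : ∀ x, 0 ≤ S x := fun x => Finset.sum_nonneg fun i _ => mul_self_nonneg _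
  have hSpos : ∀ x : Fin n → ℝ, x ≠ 0 → 0 < S x := by
    intro x hx
    obtain ⟨i, hi⟩ := Function.ne_iff.mp hx
    have h1 : 0 < x i * x i := mul_self_pos.mpr hi
    exact lt_of_lt_of_le h1 (Finset.single_le_sum (f := fun k => x k * x k)
      (fun k _ => mul_self_nonneg _) (Finset.mem_univ i))
  set c := ∑ i, ∑ j, |M0 i j| with hc
  have hc0 : 0 ≤ c := Finset.sum_nonneg fun i _ => Finset.sum_nonneg fun j _ => abs_nonneg _
  have hup : ∀ x, x ⬝ᵥ (M0 *ᵥ x) ≤ c * S x := fun x => quad_upper M0 x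
  set c₁ := ∑ i, ∑ j, |(C₁ᵀ * C₁) i j| with hc₁
  have hc₁0 : 0 ≤ c₁ := Finset.sum_nonneg fun i _ => Finset.sum_nonneg fun j _ => abs_nonneg _
  have hupC : ∀ x, x ⬝ᵥ ((C₁ᵀ * C₁) *ᵥ x) ≤ c₁ * S x := fun x => quad_upper _ x
  set lam := 1/(2*(c+1)) with hlam
  have hlam0 : 0 < lam := by rw [hlam]; positivity
  have hlamid : 2*lam*(c+1) = 1 := by rw [hlam]; field_simp
  set s := R * (c₁ + 1) with hs
  have hs0 : 0 < s := by rw [hs]; positivity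
  clear_value M0 S c c₁ lam s
  have hMq : ∀ x : Fin n → ℝ, x ≠ 0 → 0 < x ⬝ᵥ (M0 *ᵥ x) := by
    intro x hx
    rcases lt_or_eq_of_le (hpsd0 x) with h | h
    · exact h
    · exfalso
      have h1 := hlow x
      have h2 := hSpos x hx
      rw [← h] at h1
      nlinarith
  refine ⟨s • M0, lam, ?_, ?_, hlam0, ?_, ?_⟩
  · show (s • M0)ᵀ = s • M0
    rw [Matrix.transpose_smul, hsymm0]
  · rw [Matrix.posDef_iff_dotProduct_mulVec]
    constructor
    · refine isHermitian_of_isSymm ?_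
      show (s • M0)ᵀ = s • M0
      rw [Matrix.transpose_smul, hsymm0]
    · intro x hx
      have h1 := hMq x hx
      show 0 < star x ⬝ᵥ ((s • M0) *ᵥ x)
      rw [star_trivial, Matrix.smul_mulVec, dotProduct_smul, smul_eq_mul]
      exact mul_pos hs0 h1
  · rw [Matrix.posSemidef_iff_dotProduct_mulVec]
    constructor
    · refine isHermitian_of_isSymm ?_
      show (s • M0 - C₁ᵀ * C₁)ᵀ = s • M0 - C₁ᵀ * C₁
      rw [Matrix.transpose_sub, Matrix.transpose_smul, hsymm0, Matrix.transpose_mul,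
        Matrix.transpose_transpose]
    · intro x
      show 0 ≤ star x ⬝ᵥ ((s • M0 - C₁ᵀ * C₁) *ᵥ x)
      rw [star_trivial, Matrix.sub_mulVec, dotProduct_sub, Matrix.smul_mulVec,
        dotProduct_smul, smul_eq_mul]
      have e1 := hlow x
      have e2 := hupC x
      have e3 : (c₁+1) * S x ≤ (c₁+1) * (R * (x ⬝ᵥ (M0 *ᵥ x))) :=
        mul_le_mul_of_nonneg_left (hlow x) (by linarith)
      have e4 := hS0 x
      rw [hs]
      nlinarith
  · have h1 : Aᵀ * (s • M0) = s • (Aᵀ * M0) := Matrix.mul_smul _ _ _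
    have h2 : (s • M0) * A = s • (M0 * A) := Matrix.smul_mul _ _ _
    have h3 : Aᵀ * (s • M0) + (s • M0) * A = s • (-1 : Matrix (Fin n) (Fin n) ℝ) := by
      rw [h1, h2, ← smul_add, hly]
    have hkey : ((-(2 * lam)) • (s • M0) - (Aᵀ * (s • M0) + (s • M0) * A))
        = s • ((-(2*lam)) • M0 + 1) := by
      rw [h3, smul_comm (-(2*lam)) s M0, smul_add, smul_neg, sub_neg_eq_add]
    rw [hkey]
    rw [Matrix.posSemidef_iff_dotProduct_mulVec]
    constructor
    · refine isHermitian_of_isSymm ?_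
      show (s • ((-(2*lam)) • M0 + 1))ᵀ = s • ((-(2*lam)) • M0 + 1)
      rw [Matrix.transpose_smul, Matrix.transpose_add, Matrix.transpose_smul, hsymm0,
        Matrix.transpose_one]
    · intro x
      show 0 ≤ star x ⬝ᵥ ((s • ((-(2*lam)) • M0 + 1)) *ᵥ x)
      rw [star_trivial, Matrix.smul_mulVec, dotProduct_smul, smul_eq_mul]
      refine mul_nonneg hs0.le ?_
      rw [Matrix.add_mulVec, dotProduct_add, Matrix.smul_mulVec,
        dotProduct_smul, Matrix.one_mulVec, smul_eq_mul]
      have h4 : x ⬝ᵥ x = S x := by rw [hS]; simp [dotProduct]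
      have h5 := hup x
      have h6 := hpsd0 x
      have h7 := hS0 x
      have h8 : 2*lam*(x ⬝ᵥ (M0 *ᵥ x)) ≤ 2*lam*(c * S x) :=
        mul_le_mul_of_nonneg_left h5 (by linarith)
      have h9 : 2*lam*(c * S x) = (2*lam*(c+1))*(S x) - 2*lam*(S x) := by ring
      rw [hlamid, one_mul] at h9
      have h10 : 0 ≤ 2*lam*(S x) := mul_nonneg (by linarith) (hS0 x)
      rw [h4]
      linarith
end
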